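/- Let R be a left head variable free ATRS. If s is a term over the signature of R, s is a normal form of R, and s →*_U t, then t is a normal form of the uncurried system R_η↓. -/

import Mathlib

/-- First-order terms over a signature `F` with arity function `ar` and variables `V`. -/
inductive Term (F : Type) (ar : F → ℕ) (V : Type) : Type where
  | var : V → Term F ar V
  | app : (f : F) → (Fin (ar f) → Term F ar V) → Term F ar V

namespace Term

variable {F V : Type} {ar : F → ℕ}

/-- Application of a substitution. -/
def subst (σ : V → Term F ar V) : Term F ar V → Term F ar V
  | .var x => σ x
  | .app f ts => .app f (fun i => (ts i).subst σ)

/-- Size of a term. -/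
def size : Term F ar V → ℕ
  | .var _ => 1
  | .app _ ts => 1 + ∑ i, (ts i).size

end Term

section Rewriting

variable {F V : Type} {ar : F → ℕ}

/-- The (reflexive) subterm relation: `Subterm u t` means `u` occurs in `t`. -/
inductive Subterm : Term F ar V → Term F ar V → Prop where
  | refl (t) : Subterm t t
  | app (f) (ts : Fin (ar f) → Term F ar V) (i) (u) :
      Subterm u (ts i) → Subterm u (.app f ts)

/-- Proper subterm: `PSub u t` means `u` is a proper subterm of `t`. -/
def PSub (u t : Term F ar V) : Prop :=
  ∃ (f : F) (ts : Fin (ar f) → Term F ar V) (i : Fin (ar f)),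
    t = Term.app f ts ∧ Subterm u (ts i)

/-- One-step rewrite relation of a TRS `R`: closure of the rules under
contexts and substitutions. -/
inductive Rew (R : Set (Term F ar V × Term F ar V)) : Term F ar V → Term F ar V → Prop where
  | rule (l r : Term F ar V) (σ : V → Term F ar V) :
      (l, r) ∈ R → Rew R (l.subst σ) (r.subst σ)
  | congr (f : F) (ts : Fin (ar f) → Term F ar V) (i : Fin (ar f)) (u : Term F ar V) :
      Rew R (ts i) u → Rew R (.app f ts) (.app f (Function.update ts i u))

/-- Many-step rewriting. -/
def RStar (R : Set (Term F ar V × Term F ar V)) : Term F ar V → Term F ar V → Prop :=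
  Relation.ReflTransGen (Rew R)

/-- Normal forms. -/
def NF (R : Set (Term F ar V × Term F ar V)) (t : Term F ar V) : Prop := ∀ u, ¬ Rew R t u

/-- `t` rewrites to the normal form `u` (w.r.t. `R`). -/
def NormTo (R : Set (Term F ar V × Term F ar V)) (t u : Term F ar V) : Prop :=
  RStar R t u ∧ NF R u

/-- Termination: the rewrite relation is well-founded. -/
def Terminating (R : Set (Term F ar V × Term F ar V)) : Prop :=
  WellFounded (fun t s => Rew R s t)

/-- Confluence. -/
def Confluent (R : Set (Term F ar V × Term F ar V)) : Prop :=
  ∀ s t u, RStar R s t → RStar R s u → ∃ v, RStar R t v ∧ RStar R u v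

/-- Innermost one-step rewriting: the contracted redex has only normal
proper subterms. -/
inductive IRew (R : Set (Term F ar V × Term F ar V)) : Term F ar V → Term F ar V → Prop where
  | rule (l r : Term F ar V) (σ : V → Term F ar V) :
      (l, r) ∈ R → (∀ u, PSub u (l.subst σ) → NF R u) →
      IRew R (l.subst σ) (r.subst σ)
  | congr (f : F) (ts : Fin (ar f) → Term F ar V) (i : Fin (ar f)) (u : Term F ar V) :
      IRew R (ts i) u → IRew R (.app f ts) (.app f (Function.update ts i u))

/-- Innermost termination. -/
def ITerminating (R : Set (Term F ar V × Term F ar V)) : Prop :=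
  WellFounded (fun t s => IRew R s t)

/-- `m`-fold composition of a relation. -/
def RelPow (r : α → α → Prop) : ℕ → α → α → Prop
  | 0 => Eq
  | n + 1 => fun a c => ∃ b, r a b ∧ RelPow r n b c

/-- Derivation height of `t` w.r.t. a relation. -/
noncomputable def dh (r : α → α → Prop) (t : α) : ℕ :=
  sSup { m | ∃ u, RelPow r m t u }

/-- Derivational complexity w.r.t. a relation, restricted to starting terms
satisfying `P`. -/
noncomputable def dcOn {F V : Type} {ar : F → ℕ}
    (r : Term F ar V → Term F ar V → Prop) (P : Term F ar V → Prop) (n : ℕ) : ℕ :=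
  sSup { m | ∃ t, P t ∧ t.size ≤ n ∧ m = dh r t }

/-- `f ∈ O(g)`. -/
def BigO (f g : ℕ → ℕ) : Prop := ∃ M N : ℕ, ∀ n, f n ≤ M * g n + N

end Rewriting
section ATRS

/-- Signature for (un)curried applicative systems: `none` is the binary
application symbol `∘`, and `some (c, i)` is the symbol `c_i` of arity `i`
(with `c_0 = c` an applicative constant). -/
abbrev USig (C : Type) := Option (C × ℕ)

/-- Arity function for `USig`. -/
def uar {C : Type} : USig C → ℕ
  | none => 2
  | some (_, i) => i

/-- Terms over the signature `USig C` (variables are natural numbers). -/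
abbrev ATerm (C : Type) := Term (USig C) uar ℕ

variable {C : Type}

/-- Binary application `s ∘ t`. -/
def appT (s t : ATerm C) : ATerm C :=
  .app none (fun i => if i.1 = 0 then s else t)

/-- The applicative constant `c` (i.e. `c_0`). -/
def constT (c : C) : ATerm C :=
  .app (some (c, 0)) (fun i => (Nat.not_lt_zero _ i.isLt).elim)

/-- Symbols of a purely applicative term: only `∘` and constants `c_0`. -/
def ApplicativeSym : USig C → Prop
  | none => True
  | some (_, i) => i = 0

/-- A term over the applicative signature (constants plus `∘`). -/
def ApplicativeT (t : ATerm C) : Prop :=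
  ∀ (u : ATerm C) (f : USig C) (ts : Fin (uar f) → ATerm C),
    Subterm u t → u = Term.app f ts → ApplicativeSym f

/-- `headCount t = some (c, n)` iff `t = c ∘ t₁ ∘ ⋯ ∘ tₙ` for some terms `tᵢ`. -/
def headCount : ATerm C → Option (C × ℕ)
  | .var _ => none
  | .app none ts => (headCount (ts ⟨0, by simp [uar]⟩)).map (fun p => (p.1, p.2 + 1))
  | .app (some (_, _ + 1)) _ => none
  | .app (some (c, 0)) _ => some (c, 0)

/-- The spine `c ∘ t₁ ∘ ⋯ ∘ tₙ` occurs as a subterm of a left- or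
right-hand side of `R`. -/
def SpineIn (R : Set (ATerm C × ATerm C)) (c : C) (n : ℕ) : Prop :=
  ∃ p ∈ R, ∃ t : ATerm C, (Subterm t p.1 ∨ Subterm t p.2) ∧ headCount t = some (c, n)

/-- `aa` is the applicative-arity function of `R`: `aa c` is the maximal `n`
such that `c ∘ t₁ ∘ ⋯ ∘ tₙ` occurs in a rule of `R` (and `0` if `c` does not
occur applied). -/
def AASpec (R : Set (ATerm C × ATerm C)) (aa : C → ℕ) : Prop :=
  ∀ c : C, (∀ n, SpineIn R c n → n ≤ aa c) ∧ (aa c = 0 ∨ SpineIn R c (aa c))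

/-- A term is head variable free if no subterm is of the form `x ∘ v` with
`x` a variable. -/
def HeadVarFree (t : ATerm C) : Prop :=
  ∀ u : ATerm C, Subterm u t → ∀ (x : ℕ) (v : ATerm C), u ≠ appT (.var x) v

/-- Basic well-formedness of an applicative TRS: left-hand sides are not
variables, right-hand side variables occur on the left, and both sides are
applicative terms. -/
def IsATRS (R : Set (ATerm C × ATerm C)) : Prop :=
  ∀ p ∈ R, (∀ x : ℕ, p.1 ≠ Term.var x) ∧
    (∀ x : ℕ, Subterm (.var x) p.2 → Subterm (.var x) p.1) ∧
    ApplicativeT p.1 ∧ ApplicativeT p.2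

/-- `R` is left head variable free. -/
def LHVF (R : Set (ATerm C × ATerm C)) : Prop := ∀ p ∈ R, HeadVarFree p.1

/-- The variables `x_0, …, x_{i-1}`. -/
def uvars (i : ℕ) : Fin i → ATerm C := fun j => .var j.1

/-- The term `f_i(x_0,…,x_{i-1})`. -/
def fiT (c : C) (i : ℕ) : ATerm C := .app (some (c, i)) (fun j => .var j.1)

/-- The uncurrying system `U`, with rules
`c_i(x_1,…,x_i) ∘ y → c_{i+1}(x_1,…,x_i,y)` for all `0 ≤ i < aa c`. -/
def USys (aa : C → ℕ) : Set (ATerm C × ATerm C) :=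
  { p | ∃ (c : C) (i : ℕ), i < aa c ∧
      p = (appT (fiT c i) (.var i), fiT c (i + 1)) }

/-- The currying system `C(F)` (for a signature with arities `arF`), with
rules `f_{i+1}(x_1,…,x_i,y) → f_i(x_1,…,x_i) ∘ y` for all `0 ≤ i < arF f`
(where `f_{arF f}` plays the role of `f`). -/
def CurrySys {F : Type} (arF : F → ℕ) : Set (ATerm F × ATerm F) :=
  { p | ∃ (f : F) (i : ℕ), i < arF f ∧
      p = (fiT f (i + 1), appT (fiT f i) (.var i)) }

/-- The η-saturation `R_η` of `R` (w.r.t. applicative arities `aa`). -/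
inductive Eta (aa : C → ℕ) (R : Set (ATerm C × ATerm C)) : ATerm C × ATerm C → Prop where
  | base (p) : p ∈ R → Eta aa R p
  | eta (l r : ATerm C) (c : C) (n x : ℕ) :
      Eta aa R (l, r) → headCount l = some (c, n) → n < aa c →
      ¬ Subterm (.var x) l → ¬ Subterm (.var x) r →
      Eta aa R (appT l (.var x), appT r (.var x))

/-- The uncurried system `R_η↓`: the rules of `R_η` with both sides in
`U`-normal form. -/
def EtaDown (aa : C → ℕ) (R : Set (ATerm C × ATerm C)) : Set (ATerm C × ATerm C) :=
  { p | ∃ l r : ATerm C, Eta aa R (l, r) ∧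
      NormTo (USys aa) l p.1 ∧ NormTo (USys aa) r p.2 }

/-- The transformed system `U↓(R) = R_η↓ ∪ U(R)`. -/
def UD (aa : C → ℕ) (R : Set (ATerm C × ATerm C)) : Set (ATerm C × ATerm C) :=
  EtaDown aa R ∪ USys aa

/-- Symbols of the signature of `U↓(R)`: `∘` and `c_i` with `i ≤ aa c`. -/
def GoodSym (aa : C → ℕ) : USig C → Prop
  | none => True
  | some (c, i) => i ≤ aa c

/-- A term over the signature of `U↓(R)`. -/
def GoodTerm (aa : C → ℕ) (t : ATerm C) : Prop :=
  ∀ (u : ATerm C) (f : USig C) (ts : Fin (uar f) → ATerm C),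
    Subterm u t → u = Term.app f ts → GoodSym aa f

/-- `C'`: curry a term over the signature of `U↓(R)` and identify all
symbols `c_i` originating from the same constant `c`. -/
def curryId : ATerm C → ATerm C
  | .var x => .var x
  | .app none ts => appT (curryId (ts ⟨0, by simp [uar]⟩)) (curryId (ts ⟨1, by simp [uar]⟩))
  | .app (some (c, i)) ts =>
      (List.ofFn (fun j : Fin (uar (some (c, i))) => curryId (ts j))).foldl appT (constT c)

end ATRS

section Aux

variable {C : Type}

/-! ### Subterm basics -/

theorem Subterm.trans' {F V : Type} {ar : F → ℕ} {u v t : Term F ar V}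
    (h1 : Subterm u v) (h2 : Subterm v t) : Subterm u t := by
  induction h2 with
  | refl => exact h1
  | app f ts i w h ih => exact Subterm.app f ts i u (ih h1)

theorem subterm_subst {F V : Type} {ar : F → ℕ} {u t : Term F ar V}
    (σ : V → Term F ar V) (h : Subterm u t) : Subterm (u.subst σ) (t.subst σ) := by
  induction h with
  | refl => exact Subterm.refl _
  | app f ts i w h ih =>
      exact Subterm.app f (fun j => (ts j).subst σ) i _ ih

theorem reducible_of_subterm {F V : Type} {ar : F → ℕ}
    {R : Set (Term F ar V × Term F ar V)} {u t : Term F ar V}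
    (h : Subterm u t) : (∃ v, Rew R u v) → ∃ w, Rew R t w := by
  induction h with
  | refl => exact id
  | app f ts i w h ih =>
      intro hr
      obtain ⟨w', hw'⟩ := ih hr
      exact ⟨_, Rew.congr f ts i w' hw'⟩

/-! ### appT basics -/

theorem subterm_appT_left {u s t : ATerm C} (h : Subterm u s) :
    Subterm u (appT s t) :=
  Subterm.app none (fun i : Fin (uar none) => if i.1 = 0 then s else t)
    ⟨0, by simp [uar]⟩ u h

theorem subterm_appT_right {u s t : ATerm C} (h : Subterm u t) :
    Subterm u (appT s t) :=
  Subterm.app none (fun i : Fin (uar none) => if i.1 = 0 then s else t)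
    ⟨1, by simp [uar]⟩ u h

theorem subst_appT (a b : ATerm C) (σ : ℕ → ATerm C) :
    (appT a b).subst σ = appT (a.subst σ) (b.subst σ) := by
  simp only [appT, Term.subst]
  congr 1
  funext i
  by_cases h : i.1 = 0 <;> simp [h]

theorem subst_constT (c : C) (σ : ℕ → ATerm C) :
    (constT c).subst σ = constT c := by
  simp only [constT, Term.subst]
  congr 1
  funext i
  exact absurd i.isLt (by simp [uar])

theorem subst_foldl_appT (L : List (ATerm C)) (x : ATerm C) (σ : ℕ → ATerm C) :
    (L.foldl appT x).subst σ = (L.map (Term.subst σ)).foldl appT (x.subst σ) := by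
  induction L generalizing x with
  | nil => rfl
  | cons a L ih => simp [List.foldl_cons, ih, subst_appT]

theorem subterm_foldl_base {L : List (ATerm C)} {x u : ATerm C} (h : Subterm u x) :
    Subterm u (L.foldl appT x) := by
  induction L generalizing x with
  | nil => exact h
  | cons a L ih => exact ih (subterm_appT_left h)

theorem subterm_foldl_mem {L : List (ATerm C)} {x a : ATerm C} (h : a ∈ L) :
    Subterm a (L.foldl appT x) := by
  induction L generalizing x with
  | nil => exact absurd h List.not_mem_nil
  | cons b L ih =>
      rw [List.foldl_cons]
      rcases List.mem_cons.mp h with h | h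
      · subst h
        exact subterm_foldl_base (subterm_appT_right (Subterm.refl _))
      · exact ih h

/-! ### curryId equations -/

theorem curryId_app_none (ts : Fin (uar (none : USig C)) → ATerm C) :
    curryId (.app none ts)
      = appT (curryId (ts ⟨0, by simp [uar]⟩)) (curryId (ts ⟨1, by simp [uar]⟩)) := by
  rw [curryId]

theorem curryId_app_some (c : C) (i : ℕ) (ts : Fin (uar (some (c, i))) → ATerm C) :
    curryId (.app (some (c, i)) ts)
      = (List.ofFn (fun j : Fin (uar (some (c, i))) => curryId (ts j))).foldl appT (constT c) := by
  rw [curryId]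

theorem curryId_appT (s t : ATerm C) :
    curryId (appT s t) = appT (curryId s) (curryId t) := by
  rw [appT, curryId_app_none]
  simp

theorem curryId_congr (f : USig C) (ts ts' : Fin (uar f) → ATerm C)
    (h : ∀ j, curryId (ts j) = curryId (ts' j)) :
    curryId (.app f ts) = curryId (.app f ts') := by
  match f with
  | none => rw [curryId_app_none, curryId_app_none, h, h]
  | some (c, i) =>
      rw [curryId_app_some, curryId_app_some]
      exact congrArg (fun L => L.foldl appT (constT c)) (congrArg List.ofFn (funext h))

theorem subterm_curryId_component (f : USig C) (ts : Fin (uar f) → ATerm C) (i : Fin (uar f)) :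
    Subterm (curryId (ts i)) (curryId (.app f ts)) := by
  match f with
  | none =>
      rw [curryId_app_none]
      rcases i with ⟨iv, hiv⟩
      have hiv2 : iv < 2 := hiv
      interval_cases iv
      · exact subterm_appT_left (Subterm.refl _)
      · exact subterm_appT_right (Subterm.refl _)
  | some (c, n) =>
      rw [curryId_app_some]
      exact subterm_foldl_mem (by
        rw [List.mem_ofFn]
        exact ⟨i, rfl⟩)

theorem subterm_curryId {u t : ATerm C} (h : Subterm u t) :
    Subterm (curryId u) (curryId t) := by
  induction h with
  | refl => exact Subterm.refl _
  | app f ts i w h ih =>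
      exact Subterm.trans' ih (subterm_curryId_component f ts i)

theorem curryId_subst (t : ATerm C) (σ : ℕ → ATerm C) :
    curryId (t.subst σ) = (curryId t).subst (fun x => curryId (σ x)) := by
  induction t with
  | var x => rfl
  | app f ts ih =>
      match f with
      | none =>
          show curryId (.app none fun i => (ts i).subst σ) = _
          rw [curryId_app_none, curryId_app_none, subst_appT, ih, ih]
      | some (c, i) =>
          show curryId (.app (some (c, i)) fun j => (ts j).subst σ) = _
          rw [curryId_app_some, curryId_app_some, subst_foldl_appT, subst_constT,
            List.map_ofFn]
          exact congrArg (fun L : List (ATerm C) => L.foldl appT (constT c))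
            (congrArg List.ofFn (funext fun j => ih j))

/-! ### curryId on applicative terms -/

theorem applicativeT_sub {t u : ATerm C} (h : ApplicativeT t) (hs : Subterm u t) :
    ApplicativeT u := fun v f ts hv he => h v f ts (Subterm.trans' hv hs) he

theorem goodish {t : ATerm C} (h : ApplicativeT t) : curryId t = t := by
  induction t with
  | var x => rfl
  | app f ts ih =>
      match f with
      | none =>
          rw [curryId_app_none, ih, ih]
          · simp only [appT]
            congr 1
            funext i
            rcases i with ⟨iv, hiv⟩
            have hiv2 : iv < 2 := hiv
            interval_cases iv <;> simp
          · exact applicativeT_sub h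
              (Subterm.app none ts ⟨1, by simp [uar]⟩ _ (Subterm.refl _))
          · exact applicativeT_sub h
              (Subterm.app none ts ⟨0, by simp [uar]⟩ _ (Subterm.refl _))
      | some (c, i) =>
          have hi : i = 0 := h (.app (some (c, i)) ts) (some (c, i)) ts (Subterm.refl _) rfl
          subst hi
          rw [curryId_app_some]
          have : (List.ofFn fun j : Fin (uar (some (c, 0))) => curryId (ts j)) = [] := by
            simp [uar]
          rw [this]
          simp only [List.foldl_nil, constT]
          congr 1
          funext j
          exact absurd j.isLt (by simp [uar])

/-! ### curryId invariant under U-steps -/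

theorem curryId_u_step {aa : C → ℕ} {t u : ATerm C} (h : Rew (USys aa) t u) :
    curryId t = curryId u := by
  induction h with
  | rule l r σ hmem =>
      obtain ⟨c, i, hi, hp⟩ := hmem
      obtain ⟨hl, hr⟩ := Prod.mk.injEq .. ▸ hp
      subst hl; subst hr
      rw [subst_appT, curryId_appT]
      show appT (curryId ((fiT c i).subst σ)) (curryId (σ i)) = _
      have hfl : ∀ k : ℕ, curryId ((fiT c k).subst σ)
          = (List.ofFn (fun j : Fin k => curryId (σ j.1))).foldl appT (constT c) := by
        intro k
        show curryId (.app (some (c, k)) fun j => (Term.var j.1).subst σ) = _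
        rw [curryId_app_some]
        rfl
      rw [hfl, hfl]
      rw [show (List.ofFn fun j : Fin (i+1) => curryId (σ j.1))
          = (List.ofFn fun j : Fin i => curryId (σ j.1)) ++ [curryId (σ i)] by
        rw [List.ofFn_succ']
        simp [Fin.last, Fin.castSucc, Fin.castAdd, Fin.castLE]]
      rw [List.foldl_append]
      rfl
  | congr f ts i w h ih =>
      apply curryId_congr
      intro j
      by_cases hj : j = i
      · subst hj; rw [Function.update_self]; exact ih
      · rw [Function.update_of_ne hj]

theorem curryId_u_star {aa : C → ℕ} {t u : ATerm C} (h : RStar (USys aa) t u) :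
    curryId t = curryId u := by
  induction h with
  | refl => rfl
  | tail h1 h2 ih => exact ih.trans (curryId_u_step h2)

/-! ### Eta lhs facts -/

theorem applicativeT_var (x : ℕ) : ApplicativeT (Term.var x : ATerm C) := by
  intro u f ts hu he
  cases hu with
  | refl => exact absurd he (by simp)

theorem applicativeT_appT {s t : ATerm C} (hs : ApplicativeT s) (ht : ApplicativeT t) :
    ApplicativeT (appT s t) := by
  intro u f ts hu he
  simp only [appT] at hu
  cases hu with
  | refl =>
      injection he with h1 h2
      subst h1
      trivial
  | app f' ts' i w hw =>
      rcases i with ⟨iv, hiv⟩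
      have hiv2 : iv < 2 := hiv
      interval_cases iv
      · exact hs u f ts (by simpa using hw) he
      · exact ht u f ts (by simpa using hw) he

theorem eta_lhs_applicative {aa : C → ℕ} {R : Set (ATerm C × ATerm C)}
    (hR : IsATRS R) {p : ATerm C × ATerm C} (h : Eta aa R p) : ApplicativeT p.1 := by
  induction h with
  | base p hp => exact (hR p hp).2.2.1
  | eta l r c n x h hc hn hxl hxr ih =>
      exact applicativeT_appT ih (applicativeT_var x)

theorem eta_lhs_sub {aa : C → ℕ} {R : Set (ATerm C × ATerm C)}
    {p : ATerm C × ATerm C} (h : Eta aa R p) : ∃ q ∈ R, Subterm q.1 p.1 := by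
  induction h with
  | base p hp => exact ⟨p, hp, Subterm.refl _⟩
  | eta l r c n x h hc hn hxl hxr ih =>
      obtain ⟨q, hq, hsub⟩ := ih
      exact ⟨q, hq, subterm_appT_left hsub⟩

/-! ### Main step -/

theorem red_of_etadown {aa : C → ℕ} {R : Set (ATerm C × ATerm C)} (hR : IsATRS R)
    {t u : ATerm C} (h : Rew (EtaDown aa R) t u) : ∃ w, Rew R (curryId t) w := by
  induction h with
  | rule l' r' σ hmem =>
      obtain ⟨l, r, heta, ⟨hls, _⟩, _⟩ := hmem
      have hcl : curryId l' = l := by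
        rw [← curryId_u_star hls, goodish (eta_lhs_applicative hR heta)]
      obtain ⟨q, hq, hsub⟩ := eta_lhs_sub heta
      set σ' := fun x => curryId (σ x) with hσ'
      have h1 : curryId (l'.subst σ) = l.subst σ' := by
        rw [curryId_subst, hcl]
      obtain ⟨q1, q2⟩ := q
      have hred : Rew R (q1.subst σ') (q2.subst σ') := Rew.rule q1 q2 σ' hq
      have h2 : Subterm (q1.subst σ') (l.subst σ') := subterm_subst σ' hsub
      rw [h1]
      exact reducible_of_subterm h2 ⟨_, hred⟩
  | congr f ts i w h ih =>
      exact reducible_of_subterm (subterm_curryId_component f ts i) ih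

end Aux

/-- if `s` is a term over the signature of `R` in `R`-normal
form and `s →*_U t`, then `t` is a normal form of `R_η↓`. -/
theorem nf_preserved {C : Type} (R : Set (ATerm C × ATerm C)) (aa : C → ℕ)
    (hR : IsATRS R) (hl : LHVF R) (haa : AASpec R aa)
    (s t : ATerm C) (hsa : ApplicativeT s) (hnf : NF R s)
    (hst : RStar (USys aa) s t) :
    NF (EtaDown aa R) t := by
  intro u hu
  have hct : curryId t = s := by
    rw [← curryId_u_star hst, goodish hsa]
  obtain ⟨w, hw⟩ := red_of_etadown hR hu
  rw [hct] at hw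
  exact hnf w hw
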